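/- Let c > 0, β > −1, and define A₀(t) := c t^β for t > 0 (A₀ is continuous, positive, integrable near 0 and not integrable near ∞). Then for every λ > 0 and every t ≥ 0 one has Φ_{λA₀}(t) = Φ_{A₀}(λ^{1/(β+2)} t). -/

import Mathlib

open MeasureTheory Filter Set

/-- Hypotheses on the coefficient `A` of the Sturm–Liouville equation: continuous and
strictly positive on `(0,∞)`, integrable in a neighborhood of zero, but not integrable
in a neighborhood of infinity. -/
def SLHyp (A : ℝ → ℝ) : Prop :=
  ContinuousOn A (Set.Ioi 0) ∧ (∀ t > (0:ℝ), 0 < A t) ∧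
  MeasureTheory.IntegrableOn A (Set.Ioc 0 1) ∧
  (∫⁻ t in Set.Ici (1:ℝ), ENNReal.ofReal (A t)) = ⊤

/-- `Φ` is a bounded continuous function on `[0,∞)` with `Φ 0 = 1`, twice differentiable on
`(0,∞)` and satisfying the Sturm–Liouville equation `Φ'' = A Φ` there. -/
def IsSL (A Φ : ℝ → ℝ) : Prop :=
  ContinuousOn Φ (Set.Ici 0) ∧
  (∃ M : ℝ, ∀ t ≥ (0:ℝ), |Φ t| ≤ M) ∧
  Φ 0 = 1 ∧
  (∀ t > (0:ℝ), DifferentiableAt ℝ Φ t) ∧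
  (∀ t > (0:ℝ), HasDerivAt (deriv Φ) (A t * Φ t) t)

/-- On a convex subset of `(0,∞)` where `u` is nonnegative, `deriv u` is monotone. -/
lemma sl_deriv_mono (A u : ℝ → ℝ) (hA : ∀ t > (0:ℝ), 0 < A t)
    (hd2 : ∀ t > (0:ℝ), HasDerivAt (deriv u) (A t * u t) t)
    (s : Set ℝ) (hconv : Convex ℝ s) (hs : s ⊆ Set.Ioi 0)
    (hupos : ∀ x ∈ interior s, 0 ≤ u x) :
    MonotoneOn (deriv u) s := by
  apply monotoneOn_of_deriv_nonneg hconv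
  · intro x hx
    exact ((hd2 x (hs hx)).differentiableAt.continuousAt).continuousWithinAt
  · intro x hx
    exact ((hd2 x (hs (interior_subset hx))).differentiableAt).differentiableWithinAt
  · intro x hx
    rw [(hd2 x (hs (interior_subset hx))).deriv]
    exact mul_nonneg (hA x (hs (interior_subset hx))).le (hupos x hx)

/-- Key uniqueness estimate: a bounded solution of `u'' = A u` with `u 0 = 0` is nonpositive. -/
lemma sl_nonpos (A u : ℝ → ℝ) (hA : ∀ t > (0:ℝ), 0 < A t)
    (hc : ContinuousOn u (Set.Ici 0)) (M : ℝ) (hM : ∀ t ≥ (0:ℝ), |u t| ≤ M)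
    (h0 : u 0 = 0)
    (hd : ∀ t > (0:ℝ), DifferentiableAt ℝ u t)
    (hd2 : ∀ t > (0:ℝ), HasDerivAt (deriv u) (A t * u t) t) :
    ∀ t ≥ (0:ℝ), u t ≤ 0 := by
  intro t0 ht0
  by_contra hu0'
  push_neg at hu0'
  have ht0' : 0 < t0 := by
    rcases ht0.eq_or_lt with h | h
    · exfalso; rw [← h, h0] at hu0'; exact lt_irrefl 0 hu0'
    · exact h
  -- the last zero `a` of `u` before `t0`
  set K : Set ℝ := Icc (0:ℝ) t0 ∩ u ⁻¹' Iic 0 with hKdef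
  have hKclosed : IsClosed K :=
    ContinuousOn.preimage_isClosed_of_isClosed
      (hc.mono (Icc_subset_Ici_self)) isClosed_Icc isClosed_Iic
  have hKne : K.Nonempty := ⟨0, ⟨le_refl _, ht0⟩, by simp [h0]⟩
  have hKcpt : IsCompact K :=
    IsCompact.of_isClosed_subset isCompact_Icc hKclosed inter_subset_left
  set a := sSup K with ha_def
  have haK : a ∈ K := hKcpt.sSup_mem hKne
  obtain ⟨⟨ha0, hat0⟩, haU⟩ := haK
  have halt : a < t0 := lt_of_le_of_ne hat0 (by
    intro h; rw [h] at haU; exact absurd haU (not_le.mpr hu0'))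
  have hpos : ∀ x ∈ Ioc a t0, 0 < u x := by
    rintro x ⟨hax, hxt0⟩
    by_contra hx; push_neg at hx
    have hxK : x ∈ K := ⟨⟨le_trans ha0 hax.le, hxt0⟩, hx⟩
    exact absurd (le_csSup hKcpt.bddAbove hxK) (not_le.mpr hax)
  have hua : u a = 0 := by
    refine le_antisymm haU ?_
    have hcw : ContinuousWithinAt u (Ioi a) a :=
      (hc a ha0).mono (fun x hx => le_trans ha0 (le_of_lt hx))
    refine ge_of_tendsto hcw ?_
    filter_upwards [Ioc_mem_nhdsGT_of_mem (⟨le_refl a, halt⟩ : a ∈ Ico a t0)] with x hx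
    exact (hpos x hx).le
  set v := deriv u with hv_def
  have hvmono : MonotoneOn v (Ioc a t0) := by
    apply sl_deriv_mono A u hA hd2 _ (convex_Ioc a t0)
    · intro x hx; exact lt_of_le_of_lt ha0 hx.1
    · rw [interior_Ioc]; intro x hx
      exact (hpos x (Ioo_subset_Ioc_self hx)).le
  have hvt0 : 0 < v t0 := by
    by_contra hv'; push_neg at hv'
    have hanti : AntitoneOn u (Icc a t0) := by
      apply antitoneOn_of_deriv_nonpos (convex_Icc a t0)
      · exact hc.mono (fun x hx => le_trans ha0 hx.1)
      · rw [interior_Icc]; intro x hx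
        exact (hd x (lt_of_le_of_lt ha0 hx.1)).differentiableWithinAt
      · rw [interior_Icc]; intro x hx
        have hx' : x ∈ Ioc a t0 := ⟨hx.1, hx.2.le⟩
        exact le_trans (hvmono hx' ⟨halt, le_refl _⟩ hx.2.le) hv'
    have := hanti ⟨le_refl a, hat0⟩ ⟨hat0, le_refl _⟩ hat0
    rw [hua] at this; linarith
  -- u stays positive after t0
  have huposall : ∀ t ≥ t0, 0 < u t := by
    intro t ht
    by_contra hut; push_neg at hut
    set Z : Set ℝ := Ici t0 ∩ u ⁻¹' Iic 0 with hZdef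
    have hZclosed : IsClosed Z :=
      ContinuousOn.preimage_isClosed_of_isClosed
        (hc.mono (Ici_subset_Ici.mpr ht0'.le)) isClosed_Ici isClosed_Iic
    have hZne : Z.Nonempty := ⟨t, ht, hut⟩
    have hZbdd : BddBelow Z := ⟨t0, fun x hx => hx.1⟩
    set b := sInf Z with hb_def
    have hbZ : b ∈ Z := hZclosed.csInf_mem hZne hZbdd
    have hbt0 : t0 < b := lt_of_le_of_ne hbZ.1 (by
      intro h; rw [← h] at hbZ; exact absurd hbZ.2 (not_le.mpr hu0'))
    have hposb : ∀ x ∈ Ico t0 b, 0 < u x := by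
      rintro x ⟨hx1, hx2⟩
      by_contra h; push_neg at h
      exact absurd (csInf_le hZbdd ⟨hx1, h⟩) (not_le.mpr hx2)
    have hvm : MonotoneOn v (Icc t0 b) := by
      apply sl_deriv_mono A u hA hd2 _ (convex_Icc t0 b)
      · intro x hx; exact lt_of_lt_of_le ht0' hx.1
      · rw [interior_Icc]; intro x hx
        exact (hposb x ⟨hx.1.le, hx.2⟩).le
    have humono : StrictMonoOn u (Icc t0 b) := by
      apply strictMonoOn_of_deriv_pos (convex_Icc t0 b)
        (hc.mono (fun x hx => le_trans ht0'.le hx.1))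
      rw [interior_Icc]; intro x hx
      exact lt_of_lt_of_le hvt0 (hvm ⟨le_refl _, hbt0.le⟩ ⟨hx.1.le, hx.2.le⟩ hx.1.le)
    have h1 : u t0 < u b := humono ⟨le_refl _, hbt0.le⟩ ⟨hbt0.le, le_refl _⟩ hbt0
    have h2 : u b ≤ 0 := hbZ.2
    linarith
  -- linear growth contradicts boundedness
  have hM0 : 0 ≤ M := le_trans (abs_nonneg _) (hM 0 le_rfl)
  set T := t0 + (M + 1) / v t0 with hT_def
  have hT : t0 ≤ T := le_add_of_nonneg_right (div_nonneg (by linarith) hvt0.le)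
  have hvm : MonotoneOn v (Icc t0 T) := by
    apply sl_deriv_mono A u hA hd2 _ (convex_Icc t0 T)
    · intro x hx; exact lt_of_lt_of_le ht0' hx.1
    · rw [interior_Icc]; intro x hx
      exact (huposall x hx.1.le).le
  have hg : MonotoneOn (fun x => u x - v t0 * x) (Icc t0 T) := by
    apply monotoneOn_of_deriv_nonneg (convex_Icc t0 T)
    · exact ContinuousOn.sub (hc.mono (fun x hx => le_trans ht0'.le hx.1))
        ((continuous_const.mul continuous_id).continuousOn)
    · rw [interior_Icc]; intro x hx
      exact ((hd x (lt_of_lt_of_le ht0' hx.1.le)).sub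
        ((differentiable_id.const_mul (v t0)) x)).differentiableWithinAt
    · rw [interior_Icc]; intro x hx
      have hx0 : 0 < x := lt_of_lt_of_le ht0' hx.1.le
      have hder : HasDerivAt (fun x => u x - v t0 * x) (deriv u x - v t0 * 1) x :=
        ((hd x hx0).hasDerivAt).sub ((hasDerivAt_id x).const_mul (v t0))
      rw [hder.deriv]
      have hvx : v t0 ≤ v x := hvm ⟨le_refl _, hT⟩ ⟨hx.1.le, hx.2.le⟩ hx.1.le
      simp only [mul_one]
      linarith
  have hfin := hg ⟨le_refl _, hT⟩ ⟨hT, le_refl _⟩ hT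
  have hMb : u T ≤ M := le_trans (le_abs_self _) (hM T (le_trans ht0'.le hT))
  have hTT : v t0 * T - v t0 * t0 = M + 1 := by
    rw [hT_def]; field_simp; ring
  simp only at hfin
  linarith

/-- Comparison of two solutions. -/
lemma sl_diff_nonpos (A Φ₁ Φ₂ : ℝ → ℝ) (hA : ∀ t > (0:ℝ), 0 < A t)
    (h1 : IsSL A Φ₁) (h2 : IsSL A Φ₂) : ∀ t ≥ (0:ℝ), Φ₁ t ≤ Φ₂ t := by
  obtain ⟨hc1, ⟨M1, hM1⟩, h01, hd1, hdd1⟩ := h1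
  obtain ⟨hc2, ⟨M2, hM2⟩, h02, hd2, hdd2⟩ := h2
  set u : ℝ → ℝ := fun t => Φ₁ t - Φ₂ t with hu_def
  have key : ∀ t ≥ (0:ℝ), u t ≤ 0 := by
    apply sl_nonpos A u hA (hc1.sub hc2) (M1 + M2)
    · intro t ht
      calc |u t| ≤ |Φ₁ t| + |Φ₂ t| := abs_sub _ _
        _ ≤ M1 + M2 := add_le_add (hM1 t ht) (hM2 t ht)
    · simp [hu_def, h01, h02]
    · intro t ht; exact (hd1 t ht).sub (hd2 t ht)
    · intro t ht
      have heq : deriv u =ᶠ[nhds t] (fun x => deriv Φ₁ x - deriv Φ₂ x) := by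
        filter_upwards [isOpen_Ioi.mem_nhds (show t ∈ Ioi 0 from ht)] with x hx
        exact deriv_fun_sub (hd1 x hx) (hd2 x hx)
      have h := (hdd1 t ht).sub (hdd2 t ht)
      have h' := h.congr_of_eventuallyEq heq
      refine h'.congr_deriv ?_
      simp [hu_def]; ring
  intro t ht
  have := key t ht
  simp only [hu_def] at this
  linarith

/-- Uniqueness of the solution of the Sturm–Liouville problem. -/
lemma sl_unique (A Φ₁ Φ₂ : ℝ → ℝ) (hA : ∀ t > (0:ℝ), 0 < A t)
    (h1 : IsSL A Φ₁) (h2 : IsSL A Φ₂) : ∀ t ≥ (0:ℝ), Φ₁ t = Φ₂ t := fun t ht =>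
  le_antisymm (sl_diff_nonpos A Φ₁ Φ₂ hA h1 h2 t ht) (sl_diff_nonpos A Φ₂ Φ₁ hA h2 h1 t ht)

theorem scaling_of_power_coefficient_solution (c β : ℝ) (hc : 0 < c) (hβ : -1 < β)
    (lam : ℝ) (hlam : 0 < lam) (Φ₀ Φlam : ℝ → ℝ)
    (h0 : IsSL (fun t => c * t ^ β) Φ₀)
    (hl : IsSL (fun t => lam * (c * t ^ β)) Φlam) :
    SLHyp (fun t => c * t ^ β) ∧
    ∀ t ≥ (0:ℝ), Φlam t = Φ₀ (lam ^ (1 / (β + 2)) * t) := by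
  have hApos : ∀ t > (0:ℝ), 0 < c * t ^ β := fun t ht =>
    mul_pos hc (Real.rpow_pos_of_pos ht β)
  constructor
  · refine ⟨?_, hApos, ?_, ?_⟩
    · exact continuousOn_const.mul
        (ContinuousOn.rpow_const continuousOn_id (fun x hx => Or.inl (ne_of_gt hx)))
    · exact ((intervalIntegral.intervalIntegrable_rpow' hβ).1).const_mul c
    · by_contra hfin
      have hmeas : Measurable (fun t : ℝ => c * t ^ β) := by measurability
      have hint : IntegrableOn (fun t : ℝ => c * t ^ β) (Set.Ici 1) := by
        refine ⟨hmeas.aestronglyMeasurable.restrict, ?_⟩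
        have hnn : 0 ≤ᵐ[volume.restrict (Set.Ici (1:ℝ))] fun t : ℝ => c * t ^ β :=
          (ae_restrict_iff' measurableSet_Ici).2 (ae_of_all _ fun x hx =>
            mul_nonneg hc.le (Real.rpow_nonneg (by linarith [mem_Ici.mp hx]) β))
        rw [hasFiniteIntegral_iff_ofReal hnn]
        exact lt_of_le_of_ne le_top hfin
      have hint2 : IntegrableOn (fun t : ℝ => c * t ^ β) (Set.Ioi 1) :=
        hint.mono_set Ioi_subset_Ici_self
      have hint3 : IntegrableOn (fun t : ℝ => t ^ β) (Set.Ioi 1) := by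
        refine IntegrableOn.congr_fun (hint2.const_mul (1/c)) (fun x _ => ?_) measurableSet_Ioi
        field_simp
      rw [integrableOn_Ioi_rpow_iff one_pos] at hint3
      linarith
  · -- the scaling identity via uniqueness
    set μ := lam ^ (1 / (β + 2)) with hμ_def
    have hb2 : (0:ℝ) < β + 2 := by linarith
    have hμ : 0 < μ := Real.rpow_pos_of_pos hlam _
    have hμpow : μ ^ (β + 2) = lam := by
      rw [hμ_def, ← Real.rpow_mul hlam.le, one_div_mul_cancel hb2.ne', Real.rpow_one]
    have hμ2 : μ ^ (2:ℝ) = μ * μ := by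
      rw [show (2:ℝ) = ((2:ℕ):ℝ) by norm_num, Real.rpow_natCast]; ring
    have hsplit : μ ^ β * μ * μ = lam := by
      rw [← hμpow, Real.rpow_add hμ, hμ2]; ring
    obtain ⟨hc0, ⟨M0, hM0⟩, h00, hd0, hdd0⟩ := h0
    set Ψ : ℝ → ℝ := fun t => Φ₀ (μ * t) with hΨ_def
    have hlin : ∀ x : ℝ, HasDerivAt (fun y : ℝ => μ * y) μ x := by
      intro x
      simpa using (hasDerivAt_id x).const_mul μ
    have hΨd : ∀ x > (0:ℝ), HasDerivAt Ψ (deriv Φ₀ (μ * x) * μ) x := by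
      intro x hx
      exact ((hd0 (μ * x) (mul_pos hμ hx)).hasDerivAt.comp x (hlin x))
    have hΨSL : IsSL (fun t => lam * (c * t ^ β)) Ψ := by
      refine ⟨?_, ⟨M0, ?_⟩, ?_, ?_, ?_⟩
      · exact hc0.comp ((continuous_const.mul continuous_id).continuousOn)
          (fun x hx => mul_nonneg hμ.le hx)
      · intro t ht; exact hM0 (μ * t) (mul_nonneg hμ.le ht)
      · simp [hΨ_def, h00]
      · intro t ht; exact (hΨd t ht).differentiableAt
      · intro t ht
        have heq : deriv Ψ =ᶠ[nhds t] (fun x => deriv Φ₀ (μ * x) * μ) := by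
          filter_upwards [isOpen_Ioi.mem_nhds (show t ∈ Ioi 0 from ht)] with x hx
          exact (hΨd x hx).deriv
        have hW : HasDerivAt (fun x => deriv Φ₀ (μ * x) * μ)
            (c * (μ * t) ^ β * Φ₀ (μ * t) * μ * μ) t := by
          exact (((hdd0 (μ * t) (mul_pos hμ ht)).comp t (hlin t)).mul_const μ)
        have h' := hW.congr_of_eventuallyEq heq
        refine h'.congr_deriv ?_
        rw [Real.mul_rpow hμ.le ht.le, ← hsplit]
        simp [hΨ_def]; ring
    have hA'pos : ∀ t > (0:ℝ), 0 < lam * (c * t ^ β) := fun t ht =>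
      mul_pos hlam (hApos t ht)
    intro t ht
    exact sl_unique _ Φlam Ψ hA'pos hl hΨSL t ht
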